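/- Let q be a quadratic form of rank 1 on a 3-dimensional vector space over an algebraically closed field of characteristic ≠ 2 (say q = a₁x₁² with a₁ ≠ 0). Then the even Clifford algebra Cl₀(q) is isomorphic to the exterior algebra on 2 generators, i.e., to k⟨u,v⟩/(u², v², uv+vu). -/
import Mathlib


/-!
STATEMENT 3: Let `q` be a quadratic form of rank 1 on a 3-dimensional vector space over an
algebraically closed field of characteristic ≠ 2 (say `q = a₁x₁²` with `a₁ ≠ 0`).  Then the
even Clifford algebra `Cl₀(q)` is isomorphic to the exterior algebra on 2 generators,
i.e. to `k⟨u,v⟩/(u², v², uv+vu) = Λ(k²)`.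
-/

open CliffordAlgebra

/-- An isometry equivalence of quadratic forms maps the even/odd grading pieces onto each
other. -/
theorem aux_evenOdd_map {R M₁ M₂ : Type*} [CommRing R] [AddCommGroup M₁] [AddCommGroup M₂]
    [Module R M₁] [Module R M₂] {Q₁ : QuadraticForm R M₁} {Q₂ : QuadraticForm R M₂}
    (e : Q₁.IsometryEquiv Q₂) (n : ZMod 2) :
    (evenOdd Q₁ n).map (CliffordAlgebra.map e.toIsometry).toLinearMap = evenOdd Q₂ n := by
  simp_rw [evenOdd, Submodule.map_iSup, Submodule.map_pow, ι_range_map_map]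
  congr! 2
  rw [show LinearMap.range e.toIsometry.toLinearMap = ⊤ from ?_, Submodule.map_top]
  · exact LinearMap.range_eq_top.mpr e.toLinearEquiv.surjective

/-- An isometry equivalence of quadratic forms induces an algebra equivalence of the even
subalgebras of the Clifford algebras. -/
noncomputable def aux_evenEquivOfIsometry {R M₁ M₂ : Type*} [CommRing R] [AddCommGroup M₁]
    [AddCommGroup M₂] [Module R M₁] [Module R M₂] {Q₁ : QuadraticForm R M₁}
    {Q₂ : QuadraticForm R M₂} (e : Q₁.IsometryEquiv Q₂) :
    CliffordAlgebra.even Q₁ ≃ₐ[R] CliffordAlgebra.even Q₂ :=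
  ((equivOfIsometry e).subalgebraMap (CliffordAlgebra.even Q₁)).trans <|
    Subalgebra.equivOfEq _ _ <| by
      apply Subalgebra.toSubmodule_injective
      have : Subalgebra.toSubmodule
            ((CliffordAlgebra.even Q₁).map (equivOfIsometry e : _ →ₐ[R] _)) =
          (evenOdd Q₁ 0).map (CliffordAlgebra.map e.toIsometry).toLinearMap := rfl
      rw [this, aux_evenOdd_map e 0, even_toSubmodule]

theorem stmt_3 (k : Type*) [Field k] [IsAlgClosed k] (hchar : (2 : k) ≠ 0)
    (a : k) (ha : a ≠ 0)
    (Q : QuadraticForm k (Fin 3 → k))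
    (hQ : ∀ x : Fin 3 → k, Q x = a * (x 0) ^ 2) :
    Nonempty ((CliffordAlgebra.even Q) ≃ₐ[k] ExteriorAlgebra k (Fin 2 → k)) := by
  -- choose `c` with `c ^ 2 = -a`
  obtain ⟨c, hc⟩ := IsAlgClosed.exists_pow_nat_eq (-a) (n := 2) (by norm_num)
  have hc0 : c ≠ 0 := by
    rintro rfl
    apply ha
    simpa using hc.symm
  set Q₀ : QuadraticForm k (Fin 2 → k) := 0 with hQ₀
  -- the linear equivalence `k³ ≃ k² × k`
  let f : (Fin 3 → k) →ₗ[k] (Fin 2 → k) × k :=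
    { toFun := fun x => (![x 1, x 2], c * x 0)
      map_add' := fun x y => by
        refine Prod.ext ?_ (by simp [mul_add])
        funext i; fin_cases i <;> simp
      map_smul' := fun r x => by
        refine Prod.ext ?_ (by simp; ring)
        funext i; fin_cases i <;> simp }
  let g : ((Fin 2 → k) × k) →ₗ[k] (Fin 3 → k) :=
    { toFun := fun p => ![c⁻¹ * p.2, p.1 0, p.1 1]
      map_add' := fun p q => by
        funext i; fin_cases i <;> simp [mul_add]
      map_smul' := fun r p => by
        funext i; fin_cases i <;> simp <;> ring }
  let L : (Fin 3 → k) ≃ₗ[k] (Fin 2 → k) × k :=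
    { f with
      invFun := g
      left_inv := fun x => by
        funext i
        fin_cases i <;>
          simp [f, g, inv_mul_cancel_left₀ hc0]
      right_inv := fun p => by
        refine Prod.ext ?_ (by simp [f, g, mul_inv_cancel_left₀ hc0])
        funext i; fin_cases i <;> simp [f, g] }
  -- it is an isometry from `Q` to `Q' Q₀`
  let e : Q.IsometryEquiv (CliffordAlgebra.EquivEven.Q' Q₀) :=
    { L with
      map_app' := fun x => by
        rw [CliffordAlgebra.EquivEven.Q'_apply, hQ]
        show Q₀ ![x 1, x 2] - (c * x 0) * (c * x 0) = a * x 0 ^ 2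
        have : (c * x 0) * (c * x 0) = c ^ 2 * x 0 ^ 2 := by ring
        simp [hQ₀, this, hc] }
  exact ⟨(aux_evenEquivOfIsometry e).trans (CliffordAlgebra.equivEven Q₀).symm⟩
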